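/- Suppose F : [0,T] × ℝⁿ → ℝ satisfies F(t,x) ≥ γ(|x|) for a.e. t and all x, where γ is convex, strictly increasing, continuous, with inverse γ⁻¹ on its range. Let Φ₀ ≤ 0 be a constant and set Ψ(u) = ∫₀ᵀ (Φ(u'(t)) + F(t,u(t))) dt where Φ ≥ Φ₀ pointwise (Φ(v) ≥ Φ(0) = Φ₀ being the minimum). If u ∈ K satisfies Ψ(u) ≤ r with r = c₀ + Φ₀·T, c₀ ≥ 0, then sup_{[0,T]} |u| ≤ L·T + γ⁻¹(c₀/T). -/

import Mathlib

open MeasureTheory Set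

/-- The sup-norm bound on sub-level sets of `Ψ(u) = ∫₀ᵀ (Φ(u') + F(t,u)) dt`:
if `F(t,x) ≥ γ(|x|)`, `Φ ≥ Φ₀ = Φ(0)` and `Ψ(u) ≤ c₀ + Φ₀T`, then
`sup_{[0,T]} |u| ≤ LT + γ⁻¹(c₀/T)`. -/
theorem stmt10 (n : ℕ) (L T : ℝ) (hL : 0 < L) (hT : 0 < T)
    (γ : ℝ → ℝ) (hconv : ConvexOn ℝ (Ici 0) γ)
    (hmono : StrictMonoOn γ (Ici 0)) (hcont : ContinuousOn γ (Ici 0))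
    (γinv : ℝ → ℝ) (hγinv : ∀ s ∈ Ici (0:ℝ), γinv (γ s) = s)
    (Φ : EuclideanSpace ℝ (Fin n) → ℝ) (Φ₀ : ℝ) (hΦ₀ : Φ₀ ≤ 0)
    (hΦ0 : Φ (0 : EuclideanSpace ℝ (Fin n)) = Φ₀) (hΦmin : ∀ v, Φ₀ ≤ Φ v)
    (F : ℝ → EuclideanSpace ℝ (Fin n) → ℝ)
    (hF : ∀ᵐ t ∂(volume.restrict (Icc 0 T)), ∀ x, γ ‖x‖ ≤ F t x)
    (c₀ : ℝ) (hc₀ : 0 ≤ c₀) (hrange : ∃ s₀ ∈ Ici (0:ℝ), γ s₀ = c₀ / T)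
    (u u' : ℝ → EuclideanSpace ℝ (Fin n))
    (hulip : LipschitzOnWith (Real.toNNReal L) u (Icc 0 T)) (huper : u 0 = u T)
    (hud : ∀ᵐ t ∂(volume.restrict (Icc 0 T)), HasDerivAt u (u' t) t ∧ ‖u' t‖ ≤ L)
    (hint : IntegrableOn (fun t => Φ (u' t) + F t (u t)) (Icc 0 T))
    (hlev : (∫ t in Icc (0:ℝ) T, (Φ (u' t) + F t (u t))) ≤ c₀ + Φ₀ * T) :
    ∀ t ∈ Icc (0:ℝ) T, ‖u t‖ ≤ L * T + γinv (c₀ / T) := by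
  have hucont : ContinuousOn u (Icc 0 T) := hulip.continuousOn
  have hgcont : ContinuousOn (fun t => γ ‖u t‖) (Icc 0 T) := by
    apply hcont.comp (continuous_norm.comp_continuousOn hucont)
    intro t ht; exact norm_nonneg _
  have hgint : IntegrableOn (fun t => γ ‖u t‖) (Icc 0 T) := hgcont.integrableOn_Icc
  have hcint : IntegrableOn (fun _ : ℝ => Φ₀) (Icc 0 T) := integrableOn_const ((by
    rw [Real.volume_Icc]; exact ENNReal.ofReal_ne_top))
  have hmono_ae : ∀ᵐ t ∂(volume.restrict (Icc 0 T)),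
      Φ₀ + γ ‖u t‖ ≤ Φ (u' t) + F t (u t) := by
    filter_upwards [hF] with t hFt
    exact add_le_add (hΦmin _) (hFt _)
  have hint2 : IntegrableOn (fun t => Φ₀ + γ ‖u t‖) (Icc 0 T) := hcint.add hgint
  have hle : (∫ t in Icc (0:ℝ) T, (Φ₀ + γ ‖u t‖)) ≤
      ∫ t in Icc (0:ℝ) T, (Φ (u' t) + F t (u t)) :=
    integral_mono_ae hint2 hint hmono_ae
  have hvol : ((volume (Icc (0:ℝ) T)).toReal) = T := by
    rw [Real.volume_Icc, ENNReal.toReal_ofReal (by linarith)]; ring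
  have hsum : (∫ t in Icc (0:ℝ) T, (Φ₀ + γ ‖u t‖))
      = Φ₀ * T + ∫ t in Icc (0:ℝ) T, γ ‖u t‖ := by
    rw [integral_add hcint hgint, setIntegral_const, measureReal_def, hvol, smul_eq_mul, mul_comm]
  have hkey : (∫ t in Icc (0:ℝ) T, γ ‖u t‖) ≤ c₀ := by linarith
  obtain ⟨tm, htm, hminOn⟩ :=
    isCompact_Icc.exists_isMinOn (nonempty_Icc.2 hT.le) hgcont
  have hminpt : ∀ t ∈ Icc (0:ℝ) T, γ ‖u tm‖ ≤ γ ‖u t‖ := fun t ht => hminOn ht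
  have hlow : γ ‖u tm‖ * T ≤ ∫ t in Icc (0:ℝ) T, γ ‖u t‖ := by
    have hci : IntegrableOn (fun _ : ℝ => γ ‖u tm‖) (Icc 0 T) := integrableOn_const ((by
      rw [Real.volume_Icc]; exact ENNReal.ofReal_ne_top))
    have h := setIntegral_mono_on hci hgint measurableSet_Icc hminpt
    rw [setIntegral_const, smul_eq_mul, measureReal_def, hvol, mul_comm] at h
    exact h
  have hγm : γ ‖u tm‖ ≤ c₀ / T := by
    rw [le_div_iff₀ hT]; linarith
  obtain ⟨s₀, hs₀, hγs₀⟩ := hrange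
  have hnorm : ‖u tm‖ ≤ s₀ := by
    by_contra h; push_neg at h
    have := hmono hs₀ (norm_nonneg (u tm)) h
    rw [hγs₀] at this; linarith
  have hinv : γinv (c₀ / T) = s₀ := by rw [← hγs₀, hγinv s₀ hs₀]
  intro t ht
  have hdt : dist t tm ≤ T := by
    have := Real.dist_le_of_mem_Icc ht htm
    linarith
  have hd : dist (u t) (u tm) ≤ L * T := by
    have h1 := hulip.dist_le_mul t ht tm htm
    have h2 : ((Real.toNNReal L : NNReal) : ℝ) = L := Real.coe_toNNReal _ hL.le
    calc dist (u t) (u tm) ≤ L * dist t tm := by rw [← h2]; exact h1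
      _ ≤ L * T := by
        exact mul_le_mul_of_nonneg_left hdt hL.le
  calc ‖u t‖ ≤ dist (u t) (u tm) + ‖u tm‖ := by
        rw [dist_eq_norm]
        simpa using norm_add_le (u t - u tm) (u tm)
    _ ≤ L * T + s₀ := add_le_add hd hnorm
    _ = L * T + γinv (c₀ / T) := by rw [hinv]
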